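/- Suppose a family C of subsets of an infinite set A, indexed with a linear order, is d-maximum. Then there is an infinite subset A' ⊆ A and a single bit string η ∈ 2^{d+1} such that for every finite A_0 ⊆ A', the trace C(A_0) is characterized by η (i.e., C(A_0) is exactly the family of subsets of A_0 not inducing η with respect to the order). -/

import Mathlib

open Set

def traceOn {X : Type*} (C : Set (Set X)) (A : Set X) : Set (Set X) :=
  {s | ∃ c ∈ C, s = c ∩ A}

def Shatters {X : Type*} (C : Set (Set X)) (A : Set X) : Prop :=
  ∀ s ⊆ A, ∃ c ∈ C, c ∩ A = s

def VCDimEq {X : Type*} (C : Set (Set X)) (d : ℕ) : Prop :=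
  (∃ A : Set X, A.Finite ∧ A.ncard = d ∧ Shatters C A) ∧
    ∀ A : Set X, A.Finite → Shatters C A → A.ncard ≤ d

def Phi (d n : ℕ) : ℕ := if d ≤ n then ∑ i ∈ Finset.range (d + 1), n.choose i else 2 ^ n

def Induces {X : Type*} [LinearOrder X] {d : ℕ} (c : Set X) (η : Fin (d + 1) → Bool)
    (B : Set X) : Prop :=
  ∃ b : Fin (d + 1) → X, StrictMono b ∧ (∀ i, b i ∈ B) ∧ ∀ i, b i ∈ c ↔ η i = true

/-- `s` contains the pattern `w` as a subsequence. -/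
def PContains {n k : ℕ} (s : Fin n → Bool) (w : Fin k → Bool) : Prop :=
  ∃ b : Fin k → Fin n, StrictMono b ∧ ∀ i, s (b i) = w i

lemma pcontains_init {n k : ℕ} {s : Fin n → Bool} {w : Fin (k+1) → Bool}
    (h : PContains s w) : PContains s (Fin.init w) := by
  obtain ⟨b, hb, hv⟩ := h
  exact ⟨fun i => b i.castSucc, hb.comp (Fin.strictMono_castSucc ..),
    fun i => hv i.castSucc⟩

lemma pcontains_snoc {n k : ℕ} (t : Fin n → Bool) (x : Bool) (w : Fin (k+1) → Bool) :
    PContains (Fin.snoc t x) w ↔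
      PContains t w ∨ (x = w (Fin.last k) ∧ PContains t (Fin.init w)) := by
  constructor
  · rintro ⟨b, hb, hv⟩
    by_cases hlast : b (Fin.last k) = Fin.last n
    · right
      refine ⟨by have := hv (Fin.last k); rwa [hlast, Fin.snoc_last] at this, ?_⟩
      have hlt : ∀ i : Fin k, b i.castSucc < Fin.last n := fun i =>
        hlast ▸ hb (Fin.castSucc_lt_last i)
      refine ⟨fun i => (b i.castSucc).castPred (Fin.ne_last_of_lt (hlt i)), ?_, ?_⟩
      · intro i j hij
        simpa [Fin.castPred_lt_castPred_iff] using hb (Fin.castSucc_lt_castSucc_iff.mpr hij)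
      · intro i
        have := hv i.castSucc
        rwa [← Fin.castSucc_castPred (b i.castSucc) (Fin.ne_last_of_lt (hlt i)),
          Fin.snoc_castSucc] at this
    · left
      have h1 : b (Fin.last k) < Fin.last n := lt_of_le_of_ne (Fin.le_last _) hlast
      have hlt : ∀ i : Fin (k+1), b i < Fin.last n := fun i =>
        (hb.monotone (Fin.le_last i)).trans_lt h1
      refine ⟨fun i => (b i).castPred (Fin.ne_last_of_lt (hlt i)), ?_, ?_⟩
      · intro i j hij
        simpa [Fin.castPred_lt_castPred_iff] using hb hij
      · intro i
        have := hv i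
        rwa [← Fin.castSucc_castPred (b i) (Fin.ne_last_of_lt (hlt i)),
          Fin.snoc_castSucc] at this
  · rintro (⟨b, hb, hv⟩ | ⟨hx, b, hb, hv⟩)
    · refine ⟨fun i => (b i).castSucc, fun i j hij => by simpa using hb hij, ?_⟩
      intro i; rw [Fin.snoc_castSucc]; exact hv i
    · refine ⟨Fin.snoc (fun i => (b i).castSucc) (Fin.last n), ?_, ?_⟩
      · have hg : StrictMono (fun i : Fin k => (b i).castSucc (n := n)) :=
          fun i j hij => by simpa using hb hij
        intro i j hij
        rcases Fin.eq_castSucc_or_eq_last j with ⟨j', rfl⟩ | rfl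
        · obtain ⟨i', rfl⟩ := (Fin.eq_castSucc_or_eq_last i).resolve_right
            (by rintro rfl; exact absurd hij (not_lt_of_ge (Fin.le_last _)))
          rw [Fin.snoc_castSucc, Fin.snoc_castSucc]
          exact hg (Fin.castSucc_lt_castSucc_iff.mp hij)
        · obtain ⟨i', rfl⟩ := (Fin.eq_castSucc_or_eq_last i).resolve_right
            (by rintro rfl; exact absurd hij (lt_irrefl _))
          rw [Fin.snoc_castSucc, Fin.snoc_last]
          exact Fin.castSucc_lt_last _
      · intro i
        rcases Fin.eq_castSucc_or_eq_last i with ⟨i', rfl⟩ | rfl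
        · rw [Fin.snoc_castSucc, Fin.snoc_castSucc]
          exact hv i'
        · rw [Fin.snoc_last, Fin.snoc_last]
          exact hx

lemma pcontains_nil {n : ℕ} (s : Fin n → Bool) (w : Fin 0 → Bool) : PContains s w :=
  ⟨fun i => i.elim0, fun i => i.elim0, fun i => i.elim0⟩

lemma sum_choose_succ (k n : ℕ) :
    ∑ i ∈ Finset.range (k+1), (n+1).choose i
      = ∑ i ∈ Finset.range (k+1), n.choose i + ∑ i ∈ Finset.range k, n.choose i := by
  rw [Finset.sum_range_succ' (fun i => (n+1).choose i),
    Finset.sum_range_succ' (fun i => n.choose i)]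
  simp only [Nat.choose_succ_succ, Nat.succ_eq_add_one, Nat.choose_zero_right,
    Finset.sum_add_distrib]
  omega

lemma ncard_avoid : ∀ (k : ℕ) (w : Fin k → Bool) (n : ℕ),
    {s : Fin n → Bool | ¬ PContains s w}.ncard = ∑ i ∈ Finset.range k, n.choose i := by
  intro k
  induction k with
  | zero =>
    intro w n
    have h : {s : Fin n → Bool | ¬ PContains s w} = ∅ := by
      ext s; simp [pcontains_nil]
    simp [h]
  | succ k ih =>
    intro w n
    induction n with
    | zero =>
      have h : {s : Fin 0 → Bool | ¬ PContains s w} = Set.univ := by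
        ext s
        simp only [mem_setOf_eq, mem_univ, iff_true]
        rintro ⟨b, -, -⟩
        exact (b 0).elim0
      rw [h, Set.ncard_univ, Nat.card_eq_fintype_card,
        Finset.sum_range_succ' (fun i => Nat.choose 0 i)]
      simp
    | succ n ihn =>
      set wl := w (Fin.last k) with hwl
      set A := {s : Fin n → Bool | ¬ PContains s w} with hA
      set A' := {s : Fin n → Bool | ¬ PContains s (Fin.init w)} with hA'
      set Φ : (Fin (n+1) → Bool) → Bool × (Fin n → Bool) :=
        fun s => (s (Fin.last n), Fin.init s) with hΦ
      have hinj : Function.Injective Φ := by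
        intro s s' h
        rw [Prod.mk.injEq] at h
        rw [← Fin.snoc_init_self s, ← Fin.snoc_init_self s', h.1, h.2]
      have key : Φ '' {s | ¬ PContains s w} = ({!wl} ×ˢ A) ∪ ({wl} ×ˢ A') := by
        ext ⟨x, t⟩
        constructor
        · rintro ⟨s, hs, heq⟩
          rw [hΦ, Prod.mk.injEq] at heq
          obtain ⟨rfl, rfl⟩ := heq
          rw [mem_setOf_eq, ← Fin.snoc_init_self s, pcontains_snoc] at hs
          push_neg at hs
          by_cases hx : s (Fin.last n) = wl
          · exact Or.inr ⟨hx, hs.2 hx⟩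
          · exact Or.inl ⟨Bool.eq_not_iff.mpr hx, hs.1⟩
        · rintro (⟨hx, ht⟩ | ⟨hx, ht⟩)
          · refine ⟨Fin.snoc t x, ?_, by simp [hΦ, Fin.snoc_last, Fin.init_snoc]⟩
            rw [mem_setOf_eq, pcontains_snoc]
            rintro (h | ⟨h1, -⟩)
            · exact ht h
            · rw [mem_singleton_iff] at hx
              exact Bool.not_ne_self wl (hx.symm.trans h1)
          · refine ⟨Fin.snoc t x, ?_, by simp [hΦ, Fin.snoc_last, Fin.init_snoc]⟩
            rw [mem_setOf_eq, pcontains_snoc]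
            rintro (h | ⟨-, h2⟩)
            · exact ht (pcontains_init h)
            · exact ht h2
      have hdisj : Disjoint ({!wl} ×ˢ A) ({wl} ×ˢ A') := by
        rw [Set.disjoint_left]
        rintro ⟨x, t⟩ ⟨hx1, -⟩ ⟨hx2, -⟩
        rw [mem_singleton_iff] at hx1 hx2
        exact Bool.not_ne_self wl (hx1.symm.trans hx2)
      have hprod : ∀ (b : Bool) (S : Set (Fin n → Bool)),
          (({b} : Set Bool) ×ˢ S).ncard = S.ncard := by
        intro b S
        rw [Set.singleton_prod]
        exact Set.ncard_image_of_injective _ (fun u v h => congrArg Prod.snd h)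
      calc {s : Fin (n+1) → Bool | ¬ PContains s w}.ncard
          = (Φ '' {s | ¬ PContains s w}).ncard :=
            (Set.ncard_image_of_injective _ hinj).symm
        _ = ({!wl} ×ˢ A).ncard + ({wl} ×ˢ A').ncard := by
            rw [key, Set.ncard_union_eq hdisj (Set.toFinite _) (Set.toFinite _)]
        _ = A.ncard + A'.ncard := by rw [hprod, hprod]
        _ = ∑ i ∈ Finset.range (k+1), n.choose i + ∑ i ∈ Finset.range k, n.choose i := by
            rw [ihn, ih (Fin.init w) n]
        _ = ∑ i ∈ Finset.range (k+1), (n+1).choose i := (sum_choose_succ k n).symm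

theorem infinite_ramsey {α κ : Type*} [Finite κ] :
    ∀ (r : ℕ) (S : Set α), S.Infinite → ∀ f : Finset α → κ,
      ∃ T ⊆ S, T.Infinite ∧ ∃ c, ∀ B : Finset α, ↑B ⊆ T → B.card = r → f B = c := by
  intro r
  induction r with
  | zero =>
    intro S hS f
    refine ⟨S, Subset.rfl, hS, f ∅, fun B _ hB => ?_⟩
    rw [Finset.card_eq_zero] at hB
    rw [hB]
  | succ r ih =>
    intro S hS f
    classical
    -- one step of the construction
    have step : ∀ U : {U : Set α // U.Infinite ∧ U ⊆ S},
        ∃ q : α × Set α, q.1 ∈ U.1 ∧ q.2 ⊆ U.1 ∧ q.1 ∉ q.2 ∧ q.2.Infinite ∧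
          ∃ c, ∀ B : Finset α, ↑B ⊆ q.2 → B.card = r → f (insert q.1 B) = c := by
      rintro ⟨U, hU, hUS⟩
      obtain ⟨a, ha⟩ := hU.nonempty
      have hU' : (U \ {a}).Infinite := hU.diff (Set.finite_singleton a)
      obtain ⟨T, hTU, hTinf, c, hc⟩ := ih (U \ {a}) hU' (fun B => f (insert a B))
      exact ⟨(a, T), ha, hTU.trans diff_subset, fun hmem => (hTU hmem).2 rfl,
        hTinf, c, hc⟩
    choose g hg1 hg2 hg3 hg4 hg5 using step
    let F : ℕ → {U : Set α // U.Infinite ∧ U ⊆ S} := fun n =>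
      Nat.rec ⟨S, hS, Subset.rfl⟩
        (fun _ p => ⟨(g p).2, hg4 p, (hg2 p).trans p.2.2⟩) n
    have hFsucc : ∀ n, (F (n + 1)).1 = (g (F n)).2 := fun n => rfl
    set a : ℕ → α := fun n => (g (F n)).1 with ha
    -- antitonicity
    have hmono : ∀ n m, n ≤ m → (F m).1 ⊆ (F n).1 := by
      intro n m hnm
      induction m with
      | zero => rw [Nat.le_zero.mp hnm]
      | succ m ihm =>
        rcases Nat.lt_or_ge n (m + 1) with h | h
        · exact ((hg2 (F m)).trans (ihm (Nat.lt_succ_iff.mp h)))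
        · rw [Nat.le_antisymm hnm h]
    have hmem : ∀ n m, n < m → a m ∈ (g (F n)).2 := by
      intro n m hnm
      have h1 : a m ∈ (F m).1 := hg1 (F m)
      have h2 : (F m).1 ⊆ (F (n + 1)).1 := hmono (n + 1) m hnm
      exact h2 h1
    have hainj : Function.Injective a := by
      have key : ∀ n m, n < m → a n ≠ a m := by
        intro n m hnm heq
        have h := hmem n m hnm
        rw [← heq] at h
        exact hg3 (F n) h
      intro n m heq
      rcases lt_trichotomy n m with h | h | h
      · exact absurd heq (key n m h)
      · exact h
      · exact absurd heq.symm (key m n h)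
    have haS : ∀ n, a n ∈ S := fun n => (F n).2.2 (hg1 (F n))
    -- colors
    set col : ℕ → κ := fun n => (hg5 (F n)).choose with hcol
    have hcolspec : ∀ n, ∀ B : Finset α, ↑B ⊆ (g (F n)).2 → B.card = r →
        f (insert (a n) B) = col n := fun n => (hg5 (F n)).choose_spec
    obtain ⟨c, hc⟩ := Finite.exists_infinite_fiber col
    have hI : (col ⁻¹' {c}).Infinite := Set.infinite_coe_iff.mp hc
    refine ⟨a '' (col ⁻¹' {c}), ?_, hI.image (hainj.injOn), c, ?_⟩
    · rintro x ⟨n, -, rfl⟩; exact haS n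
    · intro B hBT hBcard
      -- index set
      have hJfin : (a ⁻¹' ↑B).Finite := Set.Finite.preimage (hainj.injOn) B.finite_toSet
      have hBne : B.Nonempty := Finset.card_pos.mp (by omega)
      have hJne : (hJfin.toFinset).Nonempty := by
        obtain ⟨x, hx⟩ := hBne
        obtain ⟨n, -, rfl⟩ := hBT hx
        exact ⟨n, by simp [hJfin.mem_toFinset, hx]⟩
      set n₀ := hJfin.toFinset.min' hJne with hn₀
      have hn₀J : n₀ ∈ hJfin.toFinset := hJfin.toFinset.min'_mem hJne
      have hn₀B : a n₀ ∈ B := by simpa [hJfin.mem_toFinset] using hn₀J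
      have hn₀I : n₀ ∈ col ⁻¹' {c} := by
        obtain ⟨m, hm, hma⟩ := hBT hn₀B
        rwa [hainj hma] at hm
      have herase : ↑(B.erase (a n₀)) ⊆ (g (F n₀)).2 := by
        intro x hx
        rw [Finset.coe_erase] at hx
        obtain ⟨hxB, hxne⟩ := hx
        obtain ⟨m, -, rfl⟩ := hBT hxB
        have hmJ : m ∈ hJfin.toFinset := by simp [hJfin.mem_toFinset, hxB]
        have : n₀ ≤ m := hJfin.toFinset.min'_le m hmJ
        have hne : n₀ ≠ m := fun h => hxne (by rw [h]; exact Set.mem_singleton _)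
        exact hmem n₀ m (lt_of_le_of_ne this hne)
      have hcardE : (B.erase (a n₀)).card = r := by
        rw [Finset.card_erase_of_mem hn₀B, hBcard]
        omega
      have := hcolspec n₀ (B.erase (a n₀)) herase hcardE
      rw [Finset.insert_erase hn₀B] at this
      rw [this]
      exact hn₀I

lemma phi_eq (d n : ℕ) : Phi d n = ∑ i ∈ Finset.range (d + 1), n.choose i := by
  unfold Phi
  split_ifs with h
  · rfl
  · push_neg at h
    rw [← Nat.sum_range_choose n]
    apply Finset.sum_subset
    · intro i hi
      rw [Finset.mem_range] at *
      omega
    · intro i _ hi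
      rw [Finset.mem_range] at hi
      exact Nat.choose_eq_zero_of_lt (by omega)

/-- On an infinite linearly ordered set, a d-maximum class has an infinite
subset on which all finite traces are characterized by a single forbidden
label η ∈ 2^{d+1}. -/
theorem maximum_homogeneous_label {X : Type*} [Infinite X] [LinearOrder X]
    (d : ℕ) (C : Set (Set X)) (hVC : VCDimEq C d)
    (hmax : ∀ A₀ : Set X, A₀.Finite → (traceOn C A₀).ncard = Phi d A₀.ncard) :
    ∃ A' : Set X, A'.Infinite ∧ ∃ η : Fin (d + 1) → Bool,
      ∀ A₀ ⊆ A', A₀.Finite →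
        traceOn C A₀ = {c : Set X | c ⊆ A₀ ∧ ¬ Induces c η A₀} := by
  classical
  -- Step 1: on each (d+1)-element finset some label is unrealized
  have hex : ∀ B : Finset X, ∀ h : B.card = d + 1, ∃ η : Fin (d+1) → Bool,
      ¬ ∃ c ∈ C, ∀ i, (B.orderEmbOfFin h i ∈ c ↔ η i = true) := by
    intro B h
    by_contra hcon
    push_neg at hcon
    have hcover : ∀ x ∈ B, ∃ i, B.orderEmbOfFin h i = x := by
      intro x hx
      have hr := Finset.range_orderEmbOfFin B h
      have : x ∈ Set.range (B.orderEmbOfFin h) := by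
        rw [hr]; exact hx
      exact this
    have hshat : Shatters C ↑B := by
      intro s hs
      obtain ⟨c, hcC, hc⟩ := hcon (fun i => decide (B.orderEmbOfFin h i ∈ s))
      refine ⟨c, hcC, ?_⟩
      ext x
      simp only [Set.mem_inter_iff, Finset.mem_coe]
      constructor
      · rintro ⟨hxc, hxB⟩
        obtain ⟨i, rfl⟩ := hcover x hxB
        have := (hc i).mp hxc
        exact of_decide_eq_true this
      · intro hxs
        have hxB : x ∈ B := hs hxs
        obtain ⟨i, rfl⟩ := hcover x hxB
        exact ⟨(hc i).mpr (decide_eq_true hxs), hxB⟩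
    have h1 := hVC.2 ↑B B.finite_toSet hshat
    rw [Set.ncard_coe_finset, h] at h1
    omega
  -- Step 2: the coloring and Ramsey
  set f : Finset X → (Fin (d+1) → Bool) :=
    fun B => if h : B.card = d + 1 then (hex B h).choose else (fun _ => false) with hf
  have hfspec : ∀ (B : Finset X) (h : B.card = d + 1),
      ¬ ∃ c ∈ C, ∀ i, (B.orderEmbOfFin h i ∈ c ↔ f B i = true) := by
    intro B h
    have hspec := (hex B h).choose_spec
    rw [hf]
    simpa only [dif_pos h] using hspec
  obtain ⟨A', -, hA'inf, η, hhom⟩ :=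
    infinite_ramsey (d+1) (Set.univ : Set X) Set.infinite_univ f
  -- Step 3: η is never induced inside A'
  have hforb : ∀ b : Fin (d+1) → X, StrictMono b → (∀ i, b i ∈ A') →
      ¬ ∃ c ∈ C, ∀ i, (b i ∈ c ↔ η i = true) := by
    intro b hb hbA
    set B := Finset.image b Finset.univ with hB
    have hcard : B.card = d + 1 := by
      rw [hB, Finset.card_image_of_injective _ hb.injective, Finset.card_univ,
        Fintype.card_fin]
    have hBA : ↑B ⊆ A' := by
      intro x hx
      simp only [hB, Finset.coe_image, Finset.coe_univ, Set.image_univ] at hx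
      obtain ⟨i, rfl⟩ := hx
      exact hbA i
    have hfB : f B = η := hhom B hBA hcard
    have huniq := Finset.orderEmbOfFin_unique hcard
      (f := b) (fun i => Finset.mem_image_of_mem b (Finset.mem_univ i)) hb
    rintro ⟨c, hcC, hc⟩
    apply hfspec B hcard
    refine ⟨c, hcC, fun i => ?_⟩
    rw [← congrFun huniq i, hfB]
    exact hc i
  refine ⟨A', hA'inf, η, ?_⟩
  intro A₀ hsub hfin
  -- forward inclusion
  have hfwd : traceOn C A₀ ⊆ {c : Set X | c ⊆ A₀ ∧ ¬ Induces c η A₀} := by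
    rintro s ⟨c, hcC, rfl⟩
    refine ⟨Set.inter_subset_right, ?_⟩
    rintro ⟨b, hbmono, hbmem, hbval⟩
    apply hforb b hbmono (fun i => hsub (hbmem i))
    exact ⟨c, hcC, fun i =>
      Iff.trans ⟨fun hh => ⟨hh, hbmem i⟩, fun hh => hh.1⟩ (hbval i)⟩
  -- counting
  set n := A₀.ncard with hn
  set F0 := hfin.toFinset with hF0
  have hF0card : F0.card = n := by
    rw [hF0, hn]
    exact (Set.ncard_eq_toFinset_card A₀ hfin).symm
  set e := F0.orderIsoOfFin hF0card with he
  have heA : ∀ i, (e i : X) ∈ A₀ := fun i => hfin.mem_toFinset.mp (e i).2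
  have hecov : ∀ x ∈ A₀, ∃ i, (e i : X) = x := by
    intro x hx
    exact ⟨e.symm ⟨x, hfin.mem_toFinset.mpr hx⟩, by simp⟩
  have hemono : StrictMono (fun i => (e i : X)) := fun i j hij =>
    Subtype.coe_lt_coe.mpr (e.strictMono hij)
  set G : Set X → (Fin n → Bool) := fun c i => decide ((e i : X) ∈ c) with hG
  have hIff : ∀ c : Set X, c ⊆ A₀ → (Induces c η A₀ ↔ PContains (G c) η) := by
    intro c hc
    constructor
    · rintro ⟨b, hbmono, hbmem, hbval⟩
      refine ⟨fun i => e.symm ⟨b i, hfin.mem_toFinset.mpr (hbmem i)⟩, ?_, ?_⟩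
      · intro i j hij
        exact e.symm.strictMono (Subtype.mk_lt_mk.mpr (hbmono hij))
      · intro i
        simp only [hG, OrderIso.apply_symm_apply]
        by_cases hbi : b i ∈ c
        · rw [(hbval i).mp hbi, decide_eq_true_eq]
          exact hbi
        · have h3 : η i = false := Bool.eq_false_iff.mpr
            (fun hh => hbi ((hbval i).mpr hh))
          rw [h3, decide_eq_false_iff_not]
          exact hbi
    · rintro ⟨b, hbmono, hbval⟩
      refine ⟨fun i => (e (b i) : X), hemono.comp hbmono, fun i => heA _, ?_⟩
      intro i
      have h2 := hbval i
      simp only [hG] at h2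
      rw [← h2, decide_eq_true_eq]
  have hinjOn : Set.InjOn G {c | c ⊆ A₀ ∧ ¬ Induces c η A₀} := by
    rintro c ⟨hc, -⟩ c' ⟨hc', -⟩ hGeq
    have hiff : ∀ i, ((e i : X) ∈ c ↔ (e i : X) ∈ c') := by
      intro i
      have := congrFun hGeq i
      simp only [hG] at this
      exact decide_eq_decide.mp this
    ext x
    constructor
    · intro hx
      obtain ⟨i, rfl⟩ := hecov x (hc hx)
      exact (hiff i).mp hx
    · intro hx
      obtain ⟨i, rfl⟩ := hecov x (hc' hx)
      exact (hiff i).mpr hx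
  have himg : G '' {c | c ⊆ A₀ ∧ ¬ Induces c η A₀}
      = {s : Fin n → Bool | ¬ PContains s η} := by
    ext s
    constructor
    · rintro ⟨c, ⟨hc, hni⟩, rfl⟩
      exact fun hp => hni ((hIff c hc).mpr hp)
    · intro hs
      set c : Set X := {x | ∃ i, (e i : X) = x ∧ s i = true} with hcdef
      have hcA : c ⊆ A₀ := by
        rintro x ⟨i, rfl, -⟩
        exact heA i
      have hmemiff : ∀ i, ((e i : X) ∈ c ↔ s i = true) := by
        intro i
        constructor
        · rintro ⟨j, hji, hsj⟩
          have : j = i := e.injective (Subtype.coe_injective hji)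
          rwa [← this]
        · intro hh
          exact ⟨i, rfl, hh⟩
      have hGc : G c = s := by
        funext i
        simp only [hG]
        by_cases hsi : s i = true
        · rw [hsi, @decide_eq_true_eq _ (Classical.propDecidable _)]
          exact (hmemiff i).mpr hsi
        · have h1 : (e i : X) ∉ c := fun hh => hsi ((hmemiff i).mp hh)
          rw [Bool.eq_false_iff.mpr hsi,
            @decide_eq_false_iff_not _ (Classical.propDecidable _)]
          exact h1
      refine ⟨c, ⟨hcA, ?_⟩, hGc⟩
      intro hind
      apply hs
      rw [← hGc]
      exact (hIff c hcA).mp hind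
  have hRcard : {c : Set X | c ⊆ A₀ ∧ ¬ Induces c η A₀}.ncard = Phi d n := by
    rw [← Set.ncard_image_of_injOn hinjOn, himg, ncard_avoid (d+1) η n, phi_eq]
  have hRfin : {c : Set X | c ⊆ A₀ ∧ ¬ Induces c η A₀}.Finite :=
    (Set.Finite.finite_subsets hfin).subset (fun c hc => hc.1)
  apply Set.eq_of_subset_of_ncard_le hfwd ?_ hRfin
  rw [hRcard, hmax A₀ hfin]
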